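/- Let a > b > 0 and r = a*b/(a+b). For any triangle P₁P₂P₃ with all vertices on the ellipse x²/a² + y²/b² = 1, whose three side lines each have distance exactly r from the origin, and whose interior contains the origin, the cosine of each interior angle lies in the closed interval [1 − 2*a²/(a+b)², 1 − 2*b²/(a+b)²]. -/

import Mathlib

open EuclideanGeometry
open scoped RealInnerProductSpace

private lemma ip_coord (x y : EuclideanSpace ℝ (Fin 2)) : ⟪x, y⟫ = x 0 * y 0 + x 1 * y 1 := by
  simp [PiLp.inner_apply, Fin.sum_univ_two, RCLike.inner_apply]; ring

private lemma nsq_coord (x : EuclideanSpace ℝ (Fin 2)) : ‖x‖ ^ 2 = x 0 ^ 2 + x 1 ^ 2 := by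
  rw [← real_inner_self_eq_norm_sq, ip_coord]; ring

/-- Pure real-number core computation. -/
private lemma calc_real (r2 d2 ipuv iu iv cu cv cuv nu nv : ℝ)
    (hr2 : 0 < r2) (hd2 : r2 < d2) (hnu0 : 0 < nu) (hnv0 : 0 < nv)
    (hu : iu ^ 2 = (d2 - r2) * nu ^ 2) (hv : iv ^ 2 = (d2 - r2) * nv ^ 2)
    (hLu : cu ^ 2 = r2 * nu ^ 2) (hLv : cv ^ 2 = r2 * nv ^ 2)
    (hsign : cu * cv ≤ 0)
    (hid : ipuv * d2 = iu * iv + cu * cv)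
    (hLuv : cuv ^ 2 = nu ^ 2 * nv ^ 2 - ipuv ^ 2)
    (hcuvcu : cuv = 0 → cu = 0) :
    ipuv * d2 = (d2 - 2 * r2) * (nu * nv) := by
  have hd2pos : 0 < d2 := hr2.trans hd2
  have hA : 0 < r2 * (nu * nv) := by positivity
  have hcc : cu * cv = -(r2 * (nu * nv)) := by
    have h1 : (cu * cv) ^ 2 = (r2 * (nu * nv)) ^ 2 := by
      linear_combination cv ^ 2 * hLu + r2 * nu ^ 2 * hLv
    have h2 : (cu * cv - r2 * (nu * nv)) * (cu * cv + r2 * (nu * nv)) = 0 := by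
      linear_combination h1
    rcases mul_eq_zero.mp h2 with h | h
    · linarith
    · linarith
  have h1' : (iu * iv) ^ 2 = ((d2 - r2) * (nu * nv)) ^ 2 := by
    linear_combination iv ^ 2 * hu + (d2 - r2) * nu ^ 2 * hv
  have h2' : (iu * iv - (d2 - r2) * (nu * nv)) * (iu * iv + (d2 - r2) * (nu * nv)) = 0 := by
    linear_combination h1'
  rcases mul_eq_zero.mp h2' with h | h
  · have hpos : iu * iv = (d2 - r2) * (nu * nv) := by linarith
    rw [hid, hpos, hcc]; ring
  · exfalso
    have hneg : iu * iv = -((d2 - r2) * (nu * nv)) := by linarith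
    have huv : ipuv * d2 = -(nu * nv) * d2 := by rw [hid, hneg, hcc]; ring
    have huv' : ipuv = -(nu * nv) := mul_right_cancel₀ (ne_of_gt hd2pos) huv
    have hcuv0 : cuv ^ 2 = 0 := by rw [hLuv, huv']; ring
    have hcu0 : cu = 0 := hcuvcu (sq_eq_zero_iff.mp hcuv0)
    have h6 : (0 : ℝ) = r2 * nu ^ 2 := by rw [← hLu, hcu0]; ring
    have h7 : (0 : ℝ) < r2 * nu ^ 2 := by positivity
    linarith

/-- From the distance-to-side-line hypothesis: the squared inner product identity. -/
private lemma dist_line_eq (P Q : EuclideanSpace ℝ (Fin 2)) (r : ℝ) (hr : 0 < r)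
    (hPr : r ^ 2 < ‖P‖ ^ 2)
    (h : Metric.infDist 0 (affineSpan ℝ {P, Q} : Set (EuclideanSpace ℝ (Fin 2))) = r) :
    Q - P ≠ 0 ∧ ⟪P, Q - P⟫ ^ 2 = (‖P‖ ^ 2 - r ^ 2) * ‖Q - P‖ ^ 2 := by
  set u : EuclideanSpace ℝ (Fin 2) := Q - P with hu
  have hmem : ∀ p : EuclideanSpace ℝ (Fin 2),
      p ∈ (affineSpan ℝ {P, Q} : Set (EuclideanSpace ℝ (Fin 2))) ↔ ∃ t : ℝ, p = P + t • u := by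
    intro p
    constructor
    · intro hp
      have h1 : (p - P) +ᵥ P ∈ line[ℝ, P, Q] := by
        simpa using hp
      rw [vadd_left_mem_affineSpan_pair] at h1
      obtain ⟨t, ht⟩ := h1
      refine ⟨t, ?_⟩
      have h2 : t • (Q - P) = p - P := by simpa using ht
      rw [hu, h2]; abel
    · rintro ⟨t, rfl⟩
      have h1 := smul_vsub_vadd_mem_affineSpan_pair (k := ℝ) t P Q
      have h2 : t • (Q -ᵥ P) +ᵥ P = P + t • u := by
        simp only [vsub_eq_sub, vadd_eq_add, hu]; abel
      rw [h2] at h1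
      exact h1
  have hQP : Q - P ≠ 0 := by
    intro h0
    have hset : (affineSpan ℝ {P, Q} : Set (EuclideanSpace ℝ (Fin 2))) = {P} := by
      ext p
      rw [hmem]
      simp only [hu, h0, smul_zero, add_zero, Set.mem_singleton_iff]
      constructor
      · rintro ⟨t, rfl⟩; rfl
      · rintro rfl; exact ⟨0, rfl⟩
    rw [hset, Metric.infDist_singleton, dist_zero_left] at h
    nlinarith
  refine ⟨hQP, ?_⟩
  have hu0 : 0 < ‖u‖ := by rw [hu]; exact norm_pos_iff.mpr hQP
  set p0 := P 0; set p1 := P 1; set e0 := u 0; set e1 := u 1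
  have hn2 : ‖u‖ ^ 2 = e0 ^ 2 + e1 ^ 2 := nsq_coord u
  have hn2pos : 0 < e0 ^ 2 + e1 ^ 2 := by rw [← hn2]; positivity
  have hn2ne : (e0 ^ 2 + e1 ^ 2) ≠ 0 := ne_of_gt hn2pos
  set ip := p0 * e0 + p1 * e1 with hip
  set t₀ : ℝ := -ip / (e0 ^ 2 + e1 ^ 2) with ht₀
  set q : EuclideanSpace ℝ (Fin 2) := P + t₀ • u with hq
  have hnormline : ∀ t : ℝ, ‖P + t • u‖ ^ 2 = (p0 + t * e0) ^ 2 + (p1 + t * e1) ^ 2 := by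
    intro t
    rw [nsq_coord]
    simp [p0, p1, e0, e1]
  have hqmem : q ∈ (affineSpan ℝ {P, Q} : Set (EuclideanSpace ℝ (Fin 2))) :=
    (hmem q).mpr ⟨t₀, rfl⟩
  have hle1 : r ≤ ‖q‖ := by
    have h3 : Metric.infDist (0 : EuclideanSpace ℝ (Fin 2))
        (affineSpan ℝ {P, Q} : Set (EuclideanSpace ℝ (Fin 2))) ≤ dist 0 q :=
      Metric.infDist_le_dist_of_mem hqmem
    rw [h, dist_zero_left] at h3
    exact h3
  have hle2 : ‖q‖ ≤ r := by
    by_contra hlt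
    push_neg at hlt
    rw [← h] at hlt
    obtain ⟨y, hy, hdy⟩ := (Metric.infDist_lt_iff ⟨q, hqmem⟩).mp hlt
    obtain ⟨t, rfl⟩ := (hmem y).mp hy
    rw [dist_zero_left] at hdy
    have hsq : ‖q‖ ^ 2 ≤ ‖P + t • u‖ ^ 2 := by
      rw [hq, hnormline, hnormline]
      have key : ((p0 + t * e0) ^ 2 + (p1 + t * e1) ^ 2) -
          ((p0 + t₀ * e0) ^ 2 + (p1 + t₀ * e1) ^ 2) = (e0 ^ 2 + e1 ^ 2) * (t - t₀) ^ 2 +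
          2 * (t - t₀) * (ip + t₀ * (e0 ^ 2 + e1 ^ 2)) := by
        rw [hip]; ring
      have hz : ip + t₀ * (e0 ^ 2 + e1 ^ 2) = 0 := by
        rw [ht₀]; field_simp; ring
      have key2 : ((p0 + t * e0) ^ 2 + (p1 + t * e1) ^ 2) -
          ((p0 + t₀ * e0) ^ 2 + (p1 + t₀ * e1) ^ 2) = (e0 ^ 2 + e1 ^ 2) * (t - t₀) ^ 2 := by
        rw [key, hz]; ring
      nlinarith [mul_nonneg (le_of_lt hn2pos) (sq_nonneg (t - t₀)), key2]
    nlinarith [norm_nonneg (P + t • u), norm_nonneg q]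
  have hqr : ‖q‖ ^ 2 = r ^ 2 := by rw [le_antisymm hle2 hle1]
  have hPnorm : ‖P‖ ^ 2 = p0 ^ 2 + p1 ^ 2 := nsq_coord P
  have hexp : (p0 + t₀ * e0) ^ 2 + (p1 + t₀ * e1) ^ 2 = r ^ 2 := by
    rw [← hnormline, ← hq, hqr]
  have hipP : ⟪P, Q - P⟫ = ip := by rw [← hu, ip_coord]
  have hkey : ((p0 + t₀ * e0) ^ 2 + (p1 + t₀ * e1) ^ 2) * (e0 ^ 2 + e1 ^ 2) =
      (p0 ^ 2 + p1 ^ 2) * (e0 ^ 2 + e1 ^ 2) - ip ^ 2 := by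
    rw [ht₀, hip]; field_simp; ring
  rw [hipP, hn2, hPnorm]
  rw [hexp] at hkey
  linear_combination hkey
  
private lemma ellipse_bounds (a b x y : ℝ) (hb : 0 < b) (hab : b < a)
    (hE : x ^ 2 / a ^ 2 + y ^ 2 / b ^ 2 = 1) :
    b ^ 2 ≤ x ^ 2 + y ^ 2 ∧ x ^ 2 + y ^ 2 ≤ a ^ 2 := by
  have ha : 0 < a := hb.trans hab
  have h1 : x ^ 2 * b ^ 2 + y ^ 2 * a ^ 2 = a ^ 2 * b ^ 2 := by
    field_simp at hE
    linarith [hE]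
  have h2 : (x ^ 2 + y ^ 2 - b ^ 2) * a ^ 2 = x ^ 2 * (a ^ 2 - b ^ 2) := by
    linear_combination h1
  have h3 : (a ^ 2 - x ^ 2 - y ^ 2) * b ^ 2 = y ^ 2 * (a ^ 2 - b ^ 2) := by
    linear_combination -h1
  have hab2 : 0 ≤ a ^ 2 - b ^ 2 := by nlinarith
  constructor
  · nlinarith [h2, mul_nonneg (sq_nonneg x) hab2, mul_pos ha ha]
  · nlinarith [h3, mul_nonneg (sq_nonneg y) hab2, mul_pos hb hb]

/-- Intermediate pure-real lemma at a vertex. -/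
private lemma vertex_calc (r2 d2 p0 p1 u0 u1 v0 v1 l2 l3 nu nv : ℝ)
    (hr2 : 0 < r2) (hd2 : r2 < d2)
    (hd : p0 ^ 2 + p1 ^ 2 = d2)
    (hnu : nu ^ 2 = u0 ^ 2 + u1 ^ 2) (hnu0 : 0 < nu)
    (hnv : nv ^ 2 = v0 ^ 2 + v1 ^ 2) (hnv0 : 0 < nv)
    (hl2 : 0 ≤ l2) (hl3 : 0 ≤ l3)
    (hc0 : -p0 = l2 * u0 + l3 * v0) (hc1 : -p1 = l2 * u1 + l3 * v1)
    (hu : (p0 * u0 + p1 * u1) ^ 2 = (d2 - r2) * nu ^ 2)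
    (hv : (p0 * v0 + p1 * v1) ^ 2 = (d2 - r2) * nv ^ 2) :
    (u0 * v0 + u1 * v1) * d2 = (d2 - 2 * r2) * (nu * nv) := by
  have hcueq : p0 * u1 - p1 * u0 = l3 * (u0 * v1 - u1 * v0) := by
    linear_combination (-u1) * hc0 + u0 * hc1
  have hcveq : p0 * v1 - p1 * v0 = -(l2 * (u0 * v1 - u1 * v0)) := by
    linear_combination (-v1) * hc0 + v0 * hc1
  apply calc_real r2 d2 _ (p0 * u0 + p1 * u1) (p0 * v0 + p1 * v1)
    (p0 * u1 - p1 * u0) (p0 * v1 - p1 * v0) (u0 * v1 - u1 * v0) nu nv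
    hr2 hd2 hnu0 hnv0 hu hv
  · linear_combination (u0 ^ 2 + u1 ^ 2) * hd - d2 * hnu - hu
  · linear_combination (v0 ^ 2 + v1 ^ 2) * hd - d2 * hnv - hv
  · rw [hcueq, hcveq]
    nlinarith [sq_nonneg (u0 * v1 - u1 * v0), mul_nonneg hl2 hl3]
  · linear_combination (-(u0 * v0 + u1 * v1)) * hd
  · linear_combination (-(v0 ^ 2 + v1 ^ 2)) * hnu - nu ^ 2 * hnv
  · intro h
    rw [hcueq, h, mul_zero]

set_option maxHeartbeats 1000000 in
/-- Main per-vertex lemma. -/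
private lemma vertex_bound (a b r : ℝ) (hb : 0 < b) (hab : b < a) (hr : r = a * b / (a + b))
    (P Q R : EuclideanSpace ℝ (Fin 2))
    (hEP : (P 0) ^ 2 / a ^ 2 + (P 1) ^ 2 / b ^ 2 = 1)
    (hdQ : Metric.infDist 0 (affineSpan ℝ {P, Q} : Set (EuclideanSpace ℝ (Fin 2))) = r)
    (hdR : Metric.infDist 0 (affineSpan ℝ {P, R} : Set (EuclideanSpace ℝ (Fin 2))) = r)
    (h0 : (0 : EuclideanSpace ℝ (Fin 2)) ∈
      convexHull ℝ ({P, Q, R} : Set (EuclideanSpace ℝ (Fin 2)))) :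
    Real.cos (∠ Q P R) ∈
      Set.Icc (1 - 2 * a ^ 2 / (a + b) ^ 2) (1 - 2 * b ^ 2 / (a + b) ^ 2) := by
  have ha : 0 < a := hb.trans hab
  have hapb : 0 < a + b := by linarith
  have hrpos : 0 < r := by rw [hr]; positivity
  have hrb : r < b := by
    rw [hr, div_lt_iff₀ hapb]; nlinarith
  have hPb := ellipse_bounds a b (P 0) (P 1) hb hab hEP
  have hPnorm : ‖P‖ ^ 2 = (P 0) ^ 2 + (P 1) ^ 2 := nsq_coord P
  have hd2lb : b ^ 2 ≤ ‖P‖ ^ 2 := by rw [hPnorm]; exact hPb.1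
  have hd2ub : ‖P‖ ^ 2 ≤ a ^ 2 := by rw [hPnorm]; exact hPb.2
  have hr2b : r ^ 2 < b ^ 2 := by
    rw [pow_two, pow_two]; exact mul_self_lt_mul_self hrpos.le hrb
  have hr2d : r ^ 2 < ‖P‖ ^ 2 := lt_of_lt_of_le hr2b hd2lb
  have hd2pos : 0 < ‖P‖ ^ 2 := lt_trans (by positivity) hr2d
  have hPn : ‖P‖ ≠ 0 := fun h => by rw [h] at hd2pos; norm_num at hd2pos
  obtain ⟨hQP, hipQ⟩ := dist_line_eq P Q r hrpos hr2d hdQ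
  obtain ⟨hRP, hipR⟩ := dist_line_eq P R r hrpos hr2d hdR
  -- extract a convex combination for the origin
  rw [show ({P, Q, R} : Set (EuclideanSpace ℝ (Fin 2))) = insert P {Q, R} from rfl,
    convexHull_insert (Set.insert_nonempty _ _), mem_convexJoin] at h0
  obtain ⟨p', hp', z, hz, hseg⟩ := h0
  rw [Set.mem_singleton_iff] at hp'
  rw [hp'] at hseg
  rw [convexHull_pair] at hz
  obtain ⟨c, e, hc, he, hce, hzdef⟩ := hz
  obtain ⟨s, t, hs, ht, hst, h00⟩ := hseg
  have hl2 : 0 ≤ t * c := mul_nonneg ht hc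
  have hl3 : 0 ≤ t * e := mul_nonneg ht he
  have hcomp : ∀ i : Fin 2, -(P i) = (t * c) * ((Q - P) i) + (t * e) * ((R - P) i) := by
    intro i
    have h00i : s * P i + t * z i = 0 := by
      have h4 : (s • P + t • z) i = (0 : EuclideanSpace ℝ (Fin 2)) i := by rw [h00]
      simpa using h4
    have hzi : z i = c * Q i + e * R i := by
      have h4 : ((c • Q + e • R : EuclideanSpace ℝ (Fin 2))) i = z i := by rw [hzdef]
      simp only [PiLp.add_apply, PiLp.smul_apply, smul_eq_mul] at h4
      linarith [h4]
    have hQi : (Q - P) i = Q i - P i := by simp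
    have hRi : (R - P) i = R i - P i := by simp
    rw [hQi, hRi]
    linear_combination (-1 : ℝ) * h00i + t * hzi + (P i) * hst + (t * P i) * hce
  have hnu2 : ‖Q - P‖ ^ 2 = ((Q - P) 0) ^ 2 + ((Q - P) 1) ^ 2 := nsq_coord _
  have hnv2 : ‖R - P‖ ^ 2 = ((R - P) 0) ^ 2 + ((R - P) 1) ^ 2 := nsq_coord _
  have hnu0 : 0 < ‖Q - P‖ := norm_pos_iff.mpr hQP
  have hnv0 : 0 < ‖R - P‖ := norm_pos_iff.mpr hRP
  have hu' : (P 0 * ((Q - P) 0) + P 1 * ((Q - P) 1)) ^ 2 = (‖P‖ ^ 2 - r ^ 2) * ‖Q - P‖ ^ 2 := by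
    rw [← ip_coord]; exact hipQ
  have hv' : (P 0 * ((R - P) 0) + P 1 * ((R - P) 1)) ^ 2 = (‖P‖ ^ 2 - r ^ 2) * ‖R - P‖ ^ 2 := by
    rw [← ip_coord]; exact hipR
  have hkey := vertex_calc (r ^ 2) (‖P‖ ^ 2) (P 0) (P 1)
    ((Q - P) 0) ((Q - P) 1) ((R - P) 0) ((R - P) 1) (t * c) (t * e) ‖Q - P‖ ‖R - P‖
    (by positivity) hr2d hPnorm.symm hnu2 hnu0 hnv2 hnv0 hl2 hl3
    (hcomp 0) (hcomp 1) hu' hv'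
  have hcos : Real.cos (∠ Q P R) = 1 - 2 * r ^ 2 / ‖P‖ ^ 2 := by
    rw [EuclideanGeometry.angle, InnerProductGeometry.cos_angle]
    have hvs1 : (Q -ᵥ P : EuclideanSpace ℝ (Fin 2)) = Q - P := rfl
    have hvs2 : (R -ᵥ P : EuclideanSpace ℝ (Fin 2)) = R - P := rfl
    rw [hvs1, hvs2, ip_coord]
    rw [div_eq_iff (by positivity : ‖Q - P‖ * ‖R - P‖ ≠ 0)]
    have h2 : (1 - 2 * r ^ 2 / ‖P‖ ^ 2) * (‖Q - P‖ * ‖R - P‖) * ‖P‖ ^ 2 =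
        (((Q - P) 0) * ((R - P) 0) + ((Q - P) 1) * ((R - P) 1)) * ‖P‖ ^ 2 := by
      rw [hkey]
      field_simp
    exact mul_right_cancel₀ (ne_of_gt hd2pos) h2.symm
  rw [hcos]
  have hra : r ^ 2 * (a + b) ^ 2 = a ^ 2 * b ^ 2 := by
    rw [hr]; field_simp
  constructor
  · have e1 : 1 - 2 * r ^ 2 / ‖P‖ ^ 2 - (1 - 2 * a ^ 2 / (a + b) ^ 2) =
        (2 * a ^ 2 * ‖P‖ ^ 2 - 2 * r ^ 2 * (a + b) ^ 2) / (‖P‖ ^ 2 * (a + b) ^ 2) := by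
      field_simp
      ring
    have hnum : 0 ≤ 2 * a ^ 2 * ‖P‖ ^ 2 - 2 * r ^ 2 * (a + b) ^ 2 := by
      have h6 : 2 * a ^ 2 * b ^ 2 ≤ 2 * a ^ 2 * ‖P‖ ^ 2 :=
        mul_le_mul_of_nonneg_left hd2lb (by positivity)
      linarith only [h6, hra]
    have h5 : 0 ≤ 1 - 2 * r ^ 2 / ‖P‖ ^ 2 - (1 - 2 * a ^ 2 / (a + b) ^ 2) := by
      rw [e1]; exact div_nonneg hnum (by positivity)
    linarith
  · have e1 : 1 - 2 * b ^ 2 / (a + b) ^ 2 - (1 - 2 * r ^ 2 / ‖P‖ ^ 2) =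
        (2 * r ^ 2 * (a + b) ^ 2 - 2 * b ^ 2 * ‖P‖ ^ 2) / (‖P‖ ^ 2 * (a + b) ^ 2) := by
      field_simp
      ring
    have hnum : 0 ≤ 2 * r ^ 2 * (a + b) ^ 2 - 2 * b ^ 2 * ‖P‖ ^ 2 := by
      have h6 : 2 * b ^ 2 * ‖P‖ ^ 2 ≤ 2 * b ^ 2 * a ^ 2 :=
        mul_le_mul_of_nonneg_left hd2ub (by positivity)
      linarith only [h6, hra]
    have h5 : 0 ≤ 1 - 2 * b ^ 2 / (a + b) ^ 2 - (1 - 2 * r ^ 2 / ‖P‖ ^ 2) := by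
      rw [e1]; exact div_nonneg hnum (by positivity)
    linarith

theorem incircle_family_cosine_bounds (a b : ℝ) (hb : 0 < b) (hab : b < a)
    (r : ℝ) (hr : r = a * b / (a + b))
    (P₁ P₂ P₃ : EuclideanSpace ℝ (Fin 2))
    (hind : AffineIndependent ℝ ![P₁, P₂, P₃])
    (hE₁ : (P₁ 0) ^ 2 / a ^ 2 + (P₁ 1) ^ 2 / b ^ 2 = 1)
    (hE₂ : (P₂ 0) ^ 2 / a ^ 2 + (P₂ 1) ^ 2 / b ^ 2 = 1)
    (hE₃ : (P₃ 0) ^ 2 / a ^ 2 + (P₃ 1) ^ 2 / b ^ 2 = 1)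
    (hd₁ : Metric.infDist 0 (affineSpan ℝ {P₁, P₂} : Set (EuclideanSpace ℝ (Fin 2))) = r)
    (hd₂ : Metric.infDist 0 (affineSpan ℝ {P₂, P₃} : Set (EuclideanSpace ℝ (Fin 2))) = r)
    (hd₃ : Metric.infDist 0 (affineSpan ℝ {P₃, P₁} : Set (EuclideanSpace ℝ (Fin 2))) = r)
    (h0 : (0 : EuclideanSpace ℝ (Fin 2)) ∈
      interior (convexHull ℝ ({P₁, P₂, P₃} : Set (EuclideanSpace ℝ (Fin 2))))) :
    Real.cos (∠ P₂ P₁ P₃) ∈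
      Set.Icc (1 - 2 * a ^ 2 / (a + b) ^ 2) (1 - 2 * b ^ 2 / (a + b) ^ 2) ∧
    Real.cos (∠ P₁ P₂ P₃) ∈
      Set.Icc (1 - 2 * a ^ 2 / (a + b) ^ 2) (1 - 2 * b ^ 2 / (a + b) ^ 2) ∧
    Real.cos (∠ P₁ P₃ P₂) ∈
      Set.Icc (1 - 2 * a ^ 2 / (a + b) ^ 2) (1 - 2 * b ^ 2 / (a + b) ^ 2) := by
  have h0' : (0 : EuclideanSpace ℝ (Fin 2)) ∈
      convexHull ℝ ({P₁, P₂, P₃} : Set (EuclideanSpace ℝ (Fin 2))) := interior_subset h0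
  have hd₁' : Metric.infDist 0 (affineSpan ℝ {P₂, P₁} : Set (EuclideanSpace ℝ (Fin 2))) = r := by
    rwa [Set.pair_comm]
  have hd₂' : Metric.infDist 0 (affineSpan ℝ {P₃, P₂} : Set (EuclideanSpace ℝ (Fin 2))) = r := by
    rwa [Set.pair_comm]
  have hd₃' : Metric.infDist 0 (affineSpan ℝ {P₁, P₃} : Set (EuclideanSpace ℝ (Fin 2))) = r := by
    rwa [Set.pair_comm]
  refine ⟨?_, ?_, ?_⟩
  · exact vertex_bound a b r hb hab hr P₁ P₂ P₃ hE₁ hd₁ hd₃' h0'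
  · have hset : ({P₂, P₁, P₃} : Set (EuclideanSpace ℝ (Fin 2))) = {P₁, P₂, P₃} :=
      Set.insert_comm _ _ _
    exact vertex_bound a b r hb hab hr P₂ P₁ P₃ hE₂ hd₁' hd₂ (hset ▸ h0')
  · have hset : ({P₃, P₁, P₂} : Set (EuclideanSpace ℝ (Fin 2))) = {P₁, P₂, P₃} := by
      rw [Set.insert_comm P₃ P₁, Set.pair_comm P₃ P₂]
    exact vertex_bound a b r hb hab hr P₃ P₁ P₂ hE₃ hd₃ hd₂' (hset ▸ h0')
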